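/- Let Γ be a connected finite simple graph and let χ : A(Γ) → ℝ be a nonzero character. Let L(χ) be the full subgraph of Γ induced on the vertices v with χ(v) ≠ 0, and let D(χ) be the full subgraph induced on the vertices v with χ(v) = 0. Then the following are equivalent: (1) L(χ) is not connected, or L(χ) is not dominating (i.e., some vertex of Γ outside L(χ) has no neighbor in L(χ)); (2) there exists a full subgraph Λ of Γ contained in D(χ) that separates Γ. -/

import Mathlib

def raagRels {V : Type} (G : SimpleGraph V) : Set (FreeGroup V) :=
  {r | ∃ v w : V, G.Adj v w ∧
    r = FreeGroup.of v * FreeGroup.of w * (FreeGroup.of v)⁻¹ * (FreeGroup.of w)⁻¹}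

/-- The right-angled Artin group of a simple graph. -/
abbrev RAAG {V : Type} (G : SimpleGraph V) : Type := PresentedGroup (raagRels G)

/-- The canonical generator of `RAAG G` corresponding to a vertex. -/
def raagGen {V : Type} (G : SimpleGraph V) (v : V) : RAAG G :=
  PresentedGroup.of (rels := raagRels G) v

/-- The homomorphism `A(Γ) → ℤ` sending every vertex generator to `1`. -/
def bbgChar {V : Type} (G : SimpleGraph V) : RAAG G →* Multiplicative ℤ :=
  PresentedGroup.toGroup (f := fun _ : V => Multiplicative.ofAdd (1 : ℤ)) (by
    rintro r ⟨v, w, -, rfl⟩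
    simp only [map_mul, map_inv, FreeGroup.lift_apply_of]
    group)

/-- The Bestvina–Brady group of a simple graph, as a subgroup of the RAAG. -/
def BBG {V : Type} (G : SimpleGraph V) : Subgroup (RAAG G) := (bbgChar G).ker

lemma exists_live {V : Type} (G : SimpleGraph V)
    (χ : RAAG G →* Multiplicative ℝ) (hχ : χ ≠ 1) :
    ∃ v : V, χ (raagGen G v) ≠ 1 := by
  by_contra h
  push_neg at h
  apply hχ
  exact PresentedGroup.ext fun x => (h x).trans rfl

lemma induce_singleton_connected {V : Type} (G : SimpleGraph V) (v : V) :
    (G.induce {v}).Connected := by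
  rw [SimpleGraph.connected_iff_exists_forall_reachable]
  refine ⟨⟨v, rfl⟩, ?_⟩
  rintro ⟨w, hw⟩
  cases hw
  rfl

/-- For a nonzero character `χ` of `A(Γ)` on a connected graph `Γ`: the living subgraph
(induced on vertices with `χ(v) ≠ 1`) is disconnected or non-dominating iff some full
subgraph of the dead subgraph (induced on vertices with `χ(v) = 1`) separates `Γ`. -/
theorem stmt_16 {V : Type} [Fintype V] (G : SimpleGraph V) (hG : G.Connected)
    (χ : RAAG G →* Multiplicative ℝ) (hχ : χ ≠ 1) :
    (¬(G.induce {v : V | χ (raagGen G v) ≠ 1}).Connected ∨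
      ¬(∀ v : V, χ (raagGen G v) = 1 → ∃ w : V, χ (raagGen G w) ≠ 1 ∧ G.Adj v w)) ↔
    (∃ S : Set V, S ⊆ {v : V | χ (raagGen G v) = 1} ∧ ¬(G.induce Sᶜ).Connected) := by
  set L : Set V := {v : V | χ (raagGen G v) ≠ 1} with hL
  obtain ⟨u, hu⟩ := exists_live G χ hχ
  constructor
  · rintro (h | h)
    · refine ⟨{v : V | χ (raagGen G v) = 1}, le_refl _, ?_⟩
      have : {v : V | χ (raagGen G v) = 1}ᶜ = L := by
        ext v; simp [hL]
      rw [this]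
      exact h
    · push_neg at h
      obtain ⟨v, hv, hvdead⟩ := h
      refine ⟨{w : V | χ (raagGen G w) = 1 ∧ w ≠ v}, fun w hw => hw.1, ?_⟩
      intro hconn
      have huc : u ∈ ({w : V | χ (raagGen G w) = 1 ∧ w ≠ v}ᶜ : Set V) := by
        simp only [Set.mem_compl_iff, Set.mem_setOf_eq, not_and]
        intro h'; exact absurd h' hu
      have hvc : v ∈ ({w : V | χ (raagGen G w) = 1 ∧ w ≠ v}ᶜ : Set V) := by
        simp only [Set.mem_compl_iff, Set.mem_setOf_eq, not_and]
        intro _; exact fun h' => h' rfl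
      obtain ⟨p⟩ := hconn.preconnected ⟨v, hvc⟩ ⟨u, huc⟩
      cases p with
      | nil =>
        exact hu (by simpa using hv)
      | cons h q =>
        rename_i x
        have hadj : G.Adj v x.1 := h
        have hx := x.2
        simp only [Set.mem_compl_iff, Set.mem_setOf_eq, not_and, not_ne_iff] at hx
        have hxdead : χ (raagGen G x.1) = 1 := by
          by_contra hne
          exact hvdead x.1 hne hadj
        have hxv := hx hxdead
        exact G.irrefl (hxv ▸ hadj)
  · rintro ⟨S, hS, hSc⟩
    by_contra h
    push_neg at h
    obtain ⟨hLconn, hdom⟩ := h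
    apply hSc
    have hLsub : L ⊆ Sᶜ := by
      intro v hv hvS
      exact hv (hS hvS)
    apply G.induce_connected_of_patches u (hLsub hu)
    intro v hv
    by_cases hvL : v ∈ L
    · refine ⟨L, hLsub, hu, hvL, hLconn.preconnected _ _⟩
    · simp only [hL, Set.mem_setOf_eq, not_not] at hvL
      obtain ⟨w, hw, hadj⟩ := hdom v hvL
      refine ⟨L ∪ {v}, Set.union_subset hLsub (by simpa using hv),
        Or.inl hu, Or.inr rfl, ?_⟩
      have : (G.induce (L ∪ {v})).Connected :=
        G.connected_induce_union hLconn.preconnected (induce_singleton_connected G v).preconnected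
          hw rfl hadj.symm
      exact this.preconnected _ _
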